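/- Let (D, d) be a metric space and ᾱ ∈ (0,1], and let F : D → D satisfy d(F(Q), F(Q')) ≤ (1−ᾱ) · d(Q, Q') for all Q, Q' ∈ D. Let Q⋆ ∈ D, A ≥ 0, c ≥ 0, ρ̃ ∈ [0,1). Let (Q_k)_{k≥0} be the exact iterates Q_{k+1} := F(Q_k), and assume the bias bound d(Q_k, Q⋆) ≤ A · ρ̃^k + c holds for all k ≥ 0. Let (Q̂_k)_{k≥0} be a sequence in D with Q̂_0 = Q_0 and d(Q̂_{k+1}, F(Q̂_k)) ≤ ζ_k for nonnegative reals ζ_k. Then for every L ≥ 1, Σ_{k=0}^{L−1} d(Q̂_k, Q⋆) ≤ A/(1−ρ̃) + L·c + (1/ᾱ) · Σ_{k=0}^{L−1} ζ_k. -/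
import Mathlib


theorem stmt14 {D : Type*} [MetricSpace D]
    (alphaBar : ℝ) (h0 : 0 < alphaBar) (h1 : alphaBar ≤ 1)
    (F : D → D) (hF : ∀ Q Q' : D, dist (F Q) (F Q') ≤ (1 - alphaBar) * dist Q Q')
    (Qstar : D) (A c ρ : ℝ) (hA : 0 ≤ A) (hc : 0 ≤ c) (hρ0 : 0 ≤ ρ) (hρ1 : ρ < 1)
    (Q : ℕ → D) (hQ : ∀ k : ℕ, Q (k + 1) = F (Q k))
    (hbias : ∀ k : ℕ, dist (Q k) Qstar ≤ A * ρ ^ k + c)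
    (Qhat : ℕ → D) (hQhat0 : Qhat 0 = Q 0)
    (ζ : ℕ → ℝ) (hζ : ∀ k, 0 ≤ ζ k)
    (hstat : ∀ k : ℕ, dist (Qhat (k + 1)) (F (Qhat k)) ≤ ζ k) :
    ∀ L : ℕ, 1 ≤ L →
      ∑ k ∈ Finset.range L, dist (Qhat k) Qstar
        ≤ A / (1 - ρ) + (L : ℝ) * c + (1 / alphaBar) * ∑ k ∈ Finset.range L, ζ k := by
  intro L _
  set e : ℕ → ℝ := fun k => dist (Qhat k) (Q k) with he
  -- key invariant: ᾱ * Σ_{k<L} e k + e L ≤ Σ_{k<L} ζ k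
  have key : ∀ n : ℕ, alphaBar * ∑ k ∈ Finset.range n, e k + e n
      ≤ ∑ k ∈ Finset.range n, ζ k := by
    intro n
    induction n with
    | zero => simp [he, hQhat0]
    | succ n ih =>
      have hstep : e (n + 1) ≤ (1 - alphaBar) * e n + ζ n := by
        have h1' : dist (Qhat (n+1)) (Q (n+1)) ≤
            dist (Qhat (n+1)) (F (Qhat n)) + dist (F (Qhat n)) (F (Q n)) := by
          rw [hQ n]; exact dist_triangle _ _ _
        have h2' := hF (Qhat n) (Q n)
        have := hstat n
        simp only [he]
        linarith
      rw [Finset.sum_range_succ, Finset.sum_range_succ]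
      have hen : 0 ≤ e n := dist_nonneg
      nlinarith
  have hsum_e : ∑ k ∈ Finset.range L, e k
      ≤ (1 / alphaBar) * ∑ k ∈ Finset.range L, ζ k := by
    have heL : 0 ≤ e L := dist_nonneg
    have := key L
    rw [div_mul_eq_mul_div, le_div_iff₀ h0]
    linarith
  have hgeom : ∑ k ∈ Finset.range L, ρ ^ k ≤ 1 / (1 - ρ) := by
    have h01 : 0 < 1 - ρ := by linarith
    rw [geom_sum_eq (by linarith : ρ ≠ 1)]
    have heq : (ρ ^ L - 1) / (ρ - 1) = (1 - ρ ^ L) / (1 - ρ) := by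
      rw [div_eq_div_iff (by linarith) (by linarith)]; ring
    rw [heq]
    have : 0 ≤ ρ ^ L := pow_nonneg hρ0 L
    gcongr
    linarith
  have hterm : ∀ k ∈ Finset.range L, dist (Qhat k) Qstar ≤ e k + A * ρ ^ k + c := by
    intro k _
    have := dist_triangle (Qhat k) (Q k) Qstar
    have := hbias k
    simp only [he]
    linarith
  calc ∑ k ∈ Finset.range L, dist (Qhat k) Qstar
      ≤ ∑ k ∈ Finset.range L, (e k + A * ρ ^ k + c) := Finset.sum_le_sum hterm
    _ = (∑ k ∈ Finset.range L, e k) + A * (∑ k ∈ Finset.range L, ρ ^ k)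
        + (L : ℝ) * c := by
        rw [Finset.sum_add_distrib, Finset.sum_add_distrib, ← Finset.mul_sum]
        simp [mul_comm]
    _ ≤ (1 / alphaBar) * (∑ k ∈ Finset.range L, ζ k) + A * (1 / (1 - ρ))
        + (L : ℝ) * c := by
        gcongr
    _ = A / (1 - ρ) + (L : ℝ) * c + (1 / alphaBar) * ∑ k ∈ Finset.range L, ζ k := by
        ring
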